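/- Let A be of full row rank and let F be a nonempty face of Y⁰. The projection R_F of S_F onto the x-coordinate equals cl W(𝒜⁺(F), 𝒜⁰(F), 𝒜⁻(F)), and the ℓ₁ norm is linear on R_F: for all x ∈ R_F, ‖x‖₁ = Σ_{i∈𝒜⁺(F)} x_i − Σ_{i∈𝒜⁻(F)} x_i. -/
import Mathlib


open Set

noncomputable section

variable {m n : ℕ}

/-- Euclidean distance between two vectors. -/
def en {k : ℕ} (x x' : Fin k → ℝ) : ℝ := Real.sqrt (∑ i, (x i - x' i) ^ 2)

/-- The ℓ₁ norm. -/
def l1 {k : ℕ} (x : Fin k → ℝ) : ℝ := ∑ i, |x i|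

/-- Squared Euclidean norm. -/
def sqnorm {k : ℕ} (y : Fin k → ℝ) : ℝ := ∑ i, (y i) ^ 2

/-- `A_iᵀ y`, the dot product of the `i`-th column of `A` with `y`. -/
def colDot (A : Matrix (Fin m) (Fin n) ℝ) (i : Fin n) (y : Fin m → ℝ) : ℝ := ∑ k, A k i * y k

/-- The dual feasible set `Y⁰ = {y : ‖Aᵀy‖_∞ ≤ 1}`. -/
def Ydual (A : Matrix (Fin m) (Fin n) ℝ) : Set (Fin m → ℝ) := {y | ∀ i, |colDot A i y| ≤ 1}

/-- `F` is a face of `C`: the argmax set of a linear functional over `C`. -/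
def IsFaceOf (C F : Set (Fin m → ℝ)) : Prop :=
  ∃ v : Fin m → ℝ, F = {y | y ∈ C ∧ ∀ z ∈ C, ∑ k, v k * z k ≤ ∑ k, v k * y k}

/-- `𝒜⁺(F)`. -/
def Aplus (A : Matrix (Fin m) (Fin n) ℝ) (F : Set (Fin m → ℝ)) : Set (Fin n) :=
  {i | ∀ y ∈ F, colDot A i y = 1}

/-- `𝒜⁻(F)`. -/
def Aminus (A : Matrix (Fin m) (Fin n) ℝ) (F : Set (Fin m → ℝ)) : Set (Fin n) :=
  {i | ∀ y ∈ F, colDot A i y = -1}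

/-- `𝒜⁰(F)`. -/
def Azero (A : Matrix (Fin m) (Fin n) ℝ) (F : Set (Fin m → ℝ)) : Set (Fin n) :=
  {i | ∃ y ∈ F, -1 < colDot A i y ∧ colDot A i y < 1}

/-- Solution set of the extended ℓ₁ regularization problem:
basis pursuit when `lam = 0`, Lasso-type problem when `lam > 0`. -/
def Sol (A : Matrix (Fin m) (Fin n) ℝ) (lam : ℝ) (b : Fin m → ℝ) : Set (Fin n → ℝ) :=
  if lam = 0 then
    {x | A.mulVec x = b ∧ ∀ z, A.mulVec z = b → l1 x ≤ l1 z}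
  else
    {x | ∀ z, l1 x + 1 / (2 * lam) * sqnorm (A.mulVec x - b) ≤
          l1 z + 1 / (2 * lam) * sqnorm (A.mulVec z - b)}

/-- Graph of the solution multifunction `S`. -/
def gphS (A : Matrix (Fin m) (Fin n) ℝ) : Set (ℝ × (Fin m → ℝ) × (Fin n → ℝ)) :=
  {p | 0 ≤ p.1 ∧ p.2.2 ∈ Sol A p.1 p.2.1}

/-- `A_iᵀ(b − Ax)`. -/
def resid (A : Matrix (Fin m) (Fin n) ℝ) (b : Fin m → ℝ) (x : Fin n → ℝ) (i : Fin n) : ℝ :=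
  colDot A i (b - A.mulVec x)

/-- The polyhedral cone `S_F` associated with a face `F` of `Y⁰`. -/
def SFace (A : Matrix (Fin m) (Fin n) ℝ) (F : Set (Fin m → ℝ)) :
    Set (ℝ × (Fin m → ℝ) × (Fin n → ℝ)) :=
  {p | 0 ≤ p.1 ∧
    (∀ i ∈ Aplus A F, 0 ≤ p.2.2 i ∧ resid A p.2.1 p.2.2 i = p.1) ∧
    (∀ i ∈ Azero A F, p.2.2 i = 0 ∧ |resid A p.2.1 p.2.2 i| ≤ p.1) ∧
    (∀ i ∈ Aminus A F, p.2.2 i ≤ 0 ∧ resid A p.2.1 p.2.2 i = -p.1)}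

/-- `cl W(I⁺, I⁰, I⁻)`. -/
def clW (Ip I0 Im : Set (Fin n)) : Set (Fin n → ℝ) :=
  {x | (∀ i ∈ Ip, 0 ≤ x i) ∧ (∀ i ∈ I0, x i = 0) ∧ (∀ i ∈ Im, x i ≤ 0)}

/-- `W(I⁺, I⁰, I⁻)`. -/
def Wset (Ip I0 Im : Set (Fin n)) : Set (Fin n → ℝ) :=
  {x | (∀ i ∈ Ip, 0 < x i) ∧ (∀ i ∈ I0, x i = 0) ∧ (∀ i ∈ Im, x i < 0)}

/-- The projection `D_F` of `S_F` onto the `(λ, b)` coordinates. -/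
def DFace (A : Matrix (Fin m) (Fin n) ℝ) (F : Set (Fin m → ℝ)) : Set (ℝ × (Fin m → ℝ)) :=
  (fun p => (p.1, p.2.1)) '' SFace A F

/-- The convex subdifferential of the ℓ₁ norm. -/
def l1subdiff {k : ℕ} (x : Fin k → ℝ) : Set (Fin k → ℝ) :=
  {v | ∀ z, l1 x + ∑ i, v i * (z i - x i) ≤ l1 z}

/-- Polyhedral subset of `ℝ × ℝ^m × ℝ^n`: a finite intersection of closed half-spaces. -/
def IsPolyhedral3 (s : Set (ℝ × (Fin m → ℝ) × (Fin n → ℝ))) : Prop :=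
  ∃ (k : ℕ) (a : Fin k → ℝ × (Fin m → ℝ) × (Fin n → ℝ)) (β : Fin k → ℝ),
    s = {p | ∀ j, (a j).1 * p.1 + (∑ t, (a j).2.1 t * p.2.1 t) +
          (∑ t, (a j).2.2 t * p.2.2 t) ≤ β j}

/-- Lipschitz continuity of a set-valued map on a set `X`, with constant `κ`. -/
def LipOn {a b : ℕ} (G : (Fin a → ℝ) → Set (Fin b → ℝ)) (X : Set (Fin a → ℝ)) (κ : ℝ) : Prop :=
  (∀ x ∈ X, (G x).Nonempty ∧ IsClosed (G x)) ∧
  ∀ x ∈ X, ∀ x' ∈ X, ∀ y' ∈ G x', ∃ y ∈ G x, en y' y ≤ κ * en x' x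

end


lemma dot_mid {m : ℕ} (v y1 y2 : Fin m → ℝ) :
    ∑ k, v k * ((y1 k + y2 k) / 2) = (∑ k, v k * y1 k + ∑ k, v k * y2 k) / 2 := by
  have h : ∀ k, v k * ((y1 k + y2 k) / 2) = (v k * y1 k + v k * y2 k) / 2 := fun k => by ring
  simp_rw [h]
  rw [← Finset.sum_div, Finset.sum_add_distrib]

open Classical in
theorem stmt14 {m n : ℕ} (A : Matrix (Fin m) (Fin n) ℝ) (hrank : A.rank = m)
    (F : Set (Fin m → ℝ)) (hface : IsFaceOf (Ydual A) F) (hne : F.Nonempty) :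
    ((fun p : ℝ × (Fin m → ℝ) × (Fin n → ℝ) => p.2.2) '' SFace A F =
      clW (Aplus A F) (Azero A F) (Aminus A F)) ∧
    ∀ x ∈ (fun p : ℝ × (Fin m → ℝ) × (Fin n → ℝ) => p.2.2) '' SFace A F,
      l1 x = (∑ i, if i ∈ Aplus A F then x i else 0) -
             (∑ i, if i ∈ Aminus A F then x i else 0) := by
  obtain ⟨y0, hy0⟩ := hne
  obtain ⟨v, hF⟩ := hface
  have hFsub : F ⊆ Ydual A := by intro y hy; rw [hF] at hy; exact hy.1
  have hcolmid : ∀ (i : Fin n) (y1 y2 : Fin m → ℝ),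
      colDot A i (fun k => (y1 k + y2 k) / 2) = (colDot A i y1 + colDot A i y2) / 2 :=
    fun i y1 y2 => dot_mid (fun k => A k i) y1 y2
  have hmidF : ∀ y1 ∈ F, ∀ y2 ∈ F, (fun k => (y1 k + y2 k) / 2) ∈ F := by
    intro y1 h1 y2 h2
    rw [hF] at h1 h2 ⊢
    refine ⟨fun j => ?_, fun z hz => ?_⟩
    · rw [hcolmid]
      have a1 := h1.1 j
      have a2 := h2.1 j
      rw [abs_le] at a1 a2 ⊢
      constructor <;> [linarith [a1.1, a2.1]; linarith [a1.2, a2.2]]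
    · rw [dot_mid]
      linarith [h1.2 z hz, h2.2 z hz]
  -- trichotomy
  have htri : ∀ i : Fin n, i ∈ Aplus A F ∨ i ∈ Azero A F ∨ i ∈ Aminus A F := by
    intro i
    by_cases h0 : i ∈ Azero A F
    · exact Or.inr (Or.inl h0)
    have hpm : ∀ y ∈ F, colDot A i y = 1 ∨ colDot A i y = -1 := by
      intro y hyF
      have habs := hFsub hyF i
      rw [abs_le] at habs
      rcases lt_or_eq_of_le habs.2 with hr | hr
      · rcases lt_or_eq_of_le habs.1 with hl | hl
        · exact absurd ⟨y, hyF, hl, hr⟩ h0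
        · exact Or.inr hl.symm
      · exact Or.inl hr
    by_cases hp : ∀ y ∈ F, colDot A i y = 1
    · exact Or.inl hp
    right; right
    push_neg at hp
    obtain ⟨y1, hy1F, hy1⟩ := hp
    have h1 : colDot A i y1 = -1 := (hpm y1 hy1F).resolve_left hy1
    intro y2 hy2F
    rcases hpm y2 hy2F with h2 | h2
    · exfalso
      have hmF := hmidF y1 hy1F y2 hy2F
      have hm0 : colDot A i (fun k => (y1 k + y2 k) / 2) = 0 := by
        rw [hcolmid, h1, h2]; norm_num
      exact h0 ⟨_, hmF, by rw [hm0]; norm_num, by rw [hm0]; norm_num⟩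
    · exact h2
  have hPM : ∀ i : Fin n, i ∈ Aplus A F → i ∉ Aminus A F := by
    intro i hp hm
    have := (hp y0 hy0).symm.trans (hm y0 hy0)
    norm_num at this
  have hmain : (fun p : ℝ × (Fin m → ℝ) × (Fin n → ℝ) => p.2.2) '' SFace A F =
      clW (Aplus A F) (Azero A F) (Aminus A F) := by
    apply Set.eq_of_subset_of_subset
    · rintro x ⟨⟨lam, b, x'⟩, hS, rfl⟩
      exact ⟨fun i hi => (hS.2.1 i hi).1, fun i hi => (hS.2.2.1 i hi).1,
        fun i hi => (hS.2.2.2 i hi).1⟩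
    · intro x hx
      refine ⟨(1, fun k => A.mulVec x k + y0 k, x), ?_, rfl⟩
      have hbx : ∀ i, resid A (fun k => A.mulVec x k + y0 k) x i = colDot A i y0 := by
        intro i
        unfold resid
        congr 1
        funext k
        simp
      refine ⟨zero_le_one, fun i hi => ⟨hx.1 i hi, ?_⟩, fun i hi => ⟨hx.2.1 i hi, ?_⟩,
        fun i hi => ⟨hx.2.2 i hi, ?_⟩⟩
      · rw [hbx]; exact hi y0 hy0
      · rw [hbx]; exact hFsub hy0 i
      · rw [hbx, hi y0 hy0]
  refine ⟨hmain, fun x hx => ?_⟩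
  rw [hmain] at hx
  unfold l1
  rw [← Finset.sum_sub_distrib]
  apply Finset.sum_congr rfl
  intro i _
  by_cases hp : i ∈ Aplus A F
  · rw [if_pos hp, if_neg (hPM i hp), abs_of_nonneg (hx.1 i hp), sub_zero]
  · by_cases hm : i ∈ Aminus A F
    · rw [if_neg hp, if_pos hm, abs_of_nonpos (hx.2.2 i hm), zero_sub]
    · have h0 : i ∈ Azero A F := ((htri i).resolve_left hp).resolve_right hm
      rw [if_neg hp, if_neg hm, hx.2.1 i h0]
      norm_num
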